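/- arXiv:cs/0606082 — 2 statements merged into one kernel-verified Lean document; each statement's English description precedes it below -/
import Mathlib

section
/- In the Hamming Hamster-Wheel setting with r ∈ [1, m−1], the r-modification D' of the Hamming Hamster-Wheel pseudo-distance is liberally triangle-inequality respecting: for all v, w, x ∈ 𝒱, if d'(v,x), d'(v,w), d'(w,x) are all real, then d'(v,x) ≤ d'(v,w) + d'(w,x); and if d'(v,x) = ∞, then d'(v,w) = ∞ or d'(w,x) = ∞. -/
/-- `lt` is a strict total order on `C`. -/
def StrictTotalOrder' {C : Type*} (lt : C → C → Prop) : Prop :=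
  (∀ c, ¬ lt c c) ∧ (∀ a b c, lt a b → lt b c → lt a c) ∧
  (∀ a b, a ≠ b → lt a b ∨ lt b a)

/-- The operator induced by a pseudo-distance `⟨C, lt, d⟩`. -/
def inducedOp {𝒱 C : Type*} (lt : C → C → Prop) (d : 𝒱 → 𝒱 → C)
    (A B : Set 𝒱) : Set 𝒱 :=
  {w ∈ B | ∃ v ∈ A, ∀ v' ∈ A, ∀ w' ∈ B, lt (d v w) (d v' w') ∨ d v w = d v' w'}

/-- The set of atoms on which two valuations differ. -/
def hamSet {𝒜 T : Type*} (v w : 𝒜 → T) : Set 𝒜 := {p | v p ≠ w p}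

open Classical in
/-- The valuation assigning `t1` to the atom `a0` and `t0` to every other atom. -/
noncomputable def unitVal {𝒜 T : Type*} (t0 t1 : T) (a0 : 𝒜) : 𝒜 → T :=
  fun a => if a = a0 then t1 else t0

/-- The atoms `p 1, …, p m, q 1, …, q m` are `2m` pairwise distinct atoms. -/
def hamDistinctAtoms {𝒜 : Type*} (m : ℕ) (p q : ℕ → 𝒜) : Prop :=
  (∀ i ∈ Set.Icc 1 m, ∀ j ∈ Set.Icc 1 m, p i ≠ q j) ∧
  (∀ i ∈ Set.Icc 1 m, ∀ j ∈ Set.Icc 1 m, p i = p j → i = j) ∧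
  (∀ i ∈ Set.Icc 1 m, ∀ j ∈ Set.Icc 1 m, q i = q j → i = j)

/-- `X = {v 1, …, v m, w 1, …, w m}`, where `v i = unitVal t0 t1 (p i)` and
`w i = unitVal t0 t1 (q i)`. -/
noncomputable def hamX {𝒜 T : Type*} (m : ℕ) (p q : ℕ → 𝒜) (t0 t1 : T) : Set (𝒜 → T) :=
  {x | ∃ i ∈ Set.Icc 1 m, x = unitVal t0 t1 (p i) ∨ x = unitVal t0 t1 (q i)}

open Classical in
/-- The Hamming Hamster-Wheel pseudo-distance, with costs in `ℝ ∪ {∞}` (`WithTop ℝ`). -/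
noncomputable def hamD {𝒜 T : Type*} (m : ℕ) (p q : ℕ → 𝒜) (t0 t1 : T)
    (a b : 𝒜 → T) : WithTop ℝ :=
  if a = b then 0
  else if ({a, b} : Set (𝒜 → T)) ⊆ hamX m p q t0 t1 then
    (if (∃ i ∈ Set.Icc 1 m, ∃ j ∈ Set.Icc 1 m,
          a = unitVal t0 t1 (p i) ∧ b = unitVal t0 t1 (p j)) ∨
        (∃ i ∈ Set.Icc 1 m, ∃ j ∈ Set.Icc 1 m,
          a = unitVal t0 t1 (q i) ∧ b = unitVal t0 t1 (q j)) then ((2.1 : ℝ) : WithTop ℝ)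
     else if ∃ i ∈ Set.Icc 1 m,
          ({a, b} : Set (𝒜 → T)) = {unitVal t0 t1 (p i), unitVal t0 t1 (q i)} then
        ((2.4 : ℝ) : WithTop ℝ)
     else if ∃ i ∈ Set.Icc 1 m, ∃ j ∈ Set.Icc 1 m,
          ({a, b} : Set (𝒜 → T)) = {unitVal t0 t1 (p i), unitVal t0 t1 (q j)} ∧
          ((i : ℤ) - j).natAbs ∈ ({1, m - 1} : Set ℕ) then ((2.5 : ℝ) : WithTop ℝ)
     else ((2.2 : ℝ) : WithTop ℝ))
  else if (hamSet a b).Finite then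
    (if (hamSet a b).ncard = 1 then ((1.4 : ℝ) : WithTop ℝ)
     else (((hamSet a b).ncard : ℝ) : WithTop ℝ))
  else ⊤

open Classical in
/-- The modified Hamming Hamster-Wheel operator `|` on `𝒫(𝒱)`. -/
noncomputable def hamOp {𝒜 T : Type*} (m : ℕ) (p q : ℕ → 𝒜) (t0 t1 : T)
    (A B : Set (𝒜 → T)) : Set (𝒜 → T) :=
  if ∀ a ∈ A, ∀ b ∈ B, ({a, b} : Set (𝒜 → T)) ⊆ hamX m p q t0 t1 ∨
      (¬ (hamSet a b).Finite ∨ 3 ≤ (hamSet a b).ncard) then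
    (if A ∩ hamX m p q t0 t1 = {unitVal t0 t1 (p m), unitVal t0 t1 (p 1)} ∧
        B ∩ hamX m p q t0 t1 = {unitVal t0 t1 (q m), unitVal t0 t1 (q 1)} then
      {unitVal t0 t1 (q m)}
     else if A ∩ hamX m p q t0 t1 = {unitVal t0 t1 (q m), unitVal t0 t1 (q 1)} ∧
        B ∩ hamX m p q t0 t1 = {unitVal t0 t1 (p m), unitVal t0 t1 (p 1)} then
      {unitVal t0 t1 (p m)}
     else inducedOp (· < ·) (hamD m p q t0 t1) A B)
  else inducedOp (· < ·) (hamD m p q t0 t1) A B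

open Classical in
/-- The `r`-modification `d'` of the Hamming Hamster-Wheel pseudo-distance. -/
noncomputable def hamD' {𝒜 T : Type*} (m : ℕ) (p q : ℕ → 𝒜) (t0 t1 : T) (r : ℕ)
    (a b : 𝒜 → T) : WithTop ℝ :=
  if ∃ i ∈ Set.Icc (r + 1) m,
      ({a, b} : Set (𝒜 → T)) = {unitVal t0 t1 (p i), unitVal t0 t1 (q i)} then
    ((2.3 : ℝ) : WithTop ℝ)
  else hamD m p q t0 t1 a b

section Aux

variable {𝒜 T : Type*} {t0 t1 : T}

lemma unitVal_ne (ht : t0 ≠ t1) {a0 a1 : 𝒜} (h : a0 ≠ a1) :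
    unitVal t0 t1 a0 ≠ unitVal t0 t1 a1 := by
  intro he
  have := congrFun he a0
  simp only [unitVal, if_pos rfl, if_neg h] at this
  exact ht this.symm

lemma hamSet_unitVal (ht : t0 ≠ t1) {a0 a1 : 𝒜} (h : a0 ≠ a1) :
    hamSet (unitVal t0 t1 a0) (unitVal t0 t1 a1) = {a0, a1} := by
  ext x
  simp only [hamSet, unitVal, Set.mem_setOf_eq, Set.mem_insert_iff, Set.mem_singleton_iff]
  rcases eq_or_ne x a0 with rfl | h0 <;> rcases eq_or_ne x a1 with rfl | h1 <;>
    simp_all [ht, ht.symm]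

lemma exists_atom_of_memX {m : ℕ} {p q : ℕ → 𝒜} {a : 𝒜 → T}
    (ha : a ∈ hamX m p q t0 t1) : ∃ c, a = unitVal t0 t1 c := by
  obtain ⟨i, _, hi | hi⟩ := ha
  · exact ⟨p i, hi⟩
  · exact ⟨q i, hi⟩

lemma hamSet_ncard_of_ne (ht : t0 ≠ t1) {a b : 𝒜 → T} (hab : a ≠ b)
    {c0 c1 : 𝒜} (h0 : a = unitVal t0 t1 c0) (h1 : b = unitVal t0 t1 c1) :
    (hamSet a b).ncard = 2 ∧ (hamSet a b).Finite := by
  have hc : c0 ≠ c1 := by rintro rfl; exact hab (h0.trans h1.symm)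
  subst h0 h1
  rw [hamSet_unitVal ht hc]
  exact ⟨Set.ncard_pair hc, (Set.finite_singleton _).insert _⟩

lemma hamSet_subset (v w x : 𝒜 → T) : hamSet v x ⊆ hamSet v w ∪ hamSet w x := by
  intro a ha
  by_cases h : v a = w a
  · exact Or.inr (fun he => ha (h.trans he))
  · exact Or.inl h

-- the 2.3 condition implies hamSet has ncard 2 and is finite
lemma cond23_ncard (ht : t0 ≠ t1) {m : ℕ} {p q : ℕ → 𝒜} (hdist : hamDistinctAtoms m p q)
    {r : ℕ} (hr : 1 ≤ r) {a b : 𝒜 → T}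
    (h : ∃ i ∈ Set.Icc (r + 1) m,
      ({a, b} : Set (𝒜 → T)) = {unitVal t0 t1 (p i), unitVal t0 t1 (q i)}) :
    a ≠ b ∧ (hamSet a b).ncard = 2 ∧ (hamSet a b).Finite := by
  obtain ⟨i, hi, hpair⟩ := h
  have hi' : i ∈ Set.Icc 1 m := ⟨le_trans (by omega) hi.1, hi.2⟩
  have hpq : p i ≠ q i := hdist.1 i hi' i hi'
  rw [Set.pair_eq_pair_iff] at hpair
  rcases hpair with ⟨ha, hb⟩ | ⟨ha, hb⟩
  · have hab : a ≠ b := by rw [ha, hb]; exact unitVal_ne ht hpq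
    exact ⟨hab, (hamSet_ncard_of_ne ht hab ha hb).1, (hamSet_ncard_of_ne ht hab ha hb).2⟩
  · have hab : a ≠ b := by rw [ha, hb]; exact unitVal_ne ht hpq.symm
    exact ⟨hab, (hamSet_ncard_of_ne ht hab ha hb).1, (hamSet_ncard_of_ne ht hab ha hb).2⟩

lemma hamD'_self (ht : t0 ≠ t1) {m : ℕ} {p q : ℕ → 𝒜} (hdist : hamDistinctAtoms m p q)
    {r : ℕ} (hr : 1 ≤ r) (a : 𝒜 → T) : hamD' m p q t0 t1 r a a = 0 := by
  unfold hamD'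
  rw [if_neg, hamD, if_pos rfl]
  intro h
  exact (cond23_ncard ht hdist hr h).1 rfl

lemma hamD'_top (ht : t0 ≠ t1) {m : ℕ} {p q : ℕ → 𝒜} (hdist : hamDistinctAtoms m p q)
    {r : ℕ} (hr : 1 ≤ r) {a b : 𝒜 → T} (hab : a ≠ b) (hinf : ¬ (hamSet a b).Finite) :
    hamD' m p q t0 t1 r a b = ⊤ := by
  unfold hamD'
  rw [if_neg, hamD, if_neg hab, if_neg, if_neg hinf]
  · intro hX
    obtain ⟨c0, h0⟩ := exists_atom_of_memX (hX (Set.mem_insert _ _))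
    obtain ⟨c1, h1⟩ := exists_atom_of_memX (hX (Set.mem_insert_iff.mpr (Or.inr rfl)))
    exact hinf (hamSet_ncard_of_ne ht hab h0 h1).2
  · intro h
    exact hinf (cond23_ncard ht hdist hr h).2.2

lemma hamD'_real (ht : t0 ≠ t1) {m : ℕ} {p q : ℕ → 𝒜} (hdist : hamDistinctAtoms m p q)
    {r : ℕ} (hr : 1 ≤ r) {a b : 𝒜 → T} (hab : a ≠ b) (hfin : (hamSet a b).Finite) :
    ∃ c : ℝ, hamD' m p q t0 t1 r a b = (c : WithTop ℝ) ∧ 1.4 ≤ c ∧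
      ((hamSet a b).ncard : ℝ) ≤ c ∧ c ≤ max 2.5 ((hamSet a b).ncard : ℝ) := by
  unfold hamD'
  split_ifs with h23
  · have h2 := (cond23_ncard ht hdist hr h23).2.1
    exact ⟨2.3, rfl, by norm_num, by rw [h2]; norm_num, le_max_of_le_left (by norm_num)⟩
  unfold hamD
  rw [if_neg hab]
  split_ifs with hX h1 h2 h3 hc
  · obtain ⟨c0, h0⟩ := exists_atom_of_memX (hX (Set.mem_insert _ _))
    obtain ⟨c1, h1'⟩ := exists_atom_of_memX (hX (Set.mem_insert_iff.mpr (Or.inr rfl)))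
    have h2 := (hamSet_ncard_of_ne ht hab h0 h1').1
    exact ⟨2.1, rfl, by norm_num, by rw [h2]; norm_num, le_max_of_le_left (by norm_num)⟩
  · obtain ⟨c0, h0⟩ := exists_atom_of_memX (hX (Set.mem_insert _ _))
    obtain ⟨c1, h1'⟩ := exists_atom_of_memX (hX (Set.mem_insert_iff.mpr (Or.inr rfl)))
    have h2 := (hamSet_ncard_of_ne ht hab h0 h1').1
    exact ⟨2.4, rfl, by norm_num, by rw [h2]; norm_num, le_max_of_le_left (by norm_num)⟩
  · obtain ⟨c0, h0⟩ := exists_atom_of_memX (hX (Set.mem_insert _ _))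
    obtain ⟨c1, h1'⟩ := exists_atom_of_memX (hX (Set.mem_insert_iff.mpr (Or.inr rfl)))
    have h2 := (hamSet_ncard_of_ne ht hab h0 h1').1
    exact ⟨2.5, rfl, by norm_num, by rw [h2]; norm_num, le_max_of_le_left (by norm_num)⟩
  · obtain ⟨c0, h0⟩ := exists_atom_of_memX (hX (Set.mem_insert _ _))
    obtain ⟨c1, h1'⟩ := exists_atom_of_memX (hX (Set.mem_insert_iff.mpr (Or.inr rfl)))
    have h2 := (hamSet_ncard_of_ne ht hab h0 h1').1
    exact ⟨2.2, rfl, by norm_num, by rw [h2]; norm_num, le_max_of_le_left (by norm_num)⟩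
  · exact ⟨1.4, rfl, le_refl _, by rw [hc]; norm_num, le_max_of_le_left (by norm_num)⟩
  · have hpos : 0 < (hamSet a b).ncard := by
      rw [Set.ncard_pos hfin]
      obtain ⟨x, hx⟩ := Function.ne_iff.mp hab
      exact ⟨x, hx⟩
    have h2 : 2 ≤ (hamSet a b).ncard := by omega
    refine ⟨(hamSet a b).ncard, rfl, ?_, le_refl _, le_max_of_le_right (le_refl _)⟩
    have : (2 : ℝ) ≤ ((hamSet a b).ncard : ℝ) := by exact_mod_cast h2
    linarith

end Aux

/-- The `r`-modification of the Hamming Hamster-Wheel pseudo-distance is liberally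
triangle-inequality respecting. -/
theorem stmt12 {𝒜 T : Type*} [Countable 𝒜] [Infinite 𝒜]
    (t0 t1 : T) (ht : t0 ≠ t1)
    (m : ℕ) (hm : 4 ≤ m) (p q : ℕ → 𝒜) (hdist : hamDistinctAtoms m p q)
    (r : ℕ) (hr : r ∈ Set.Icc 1 (m - 1)) :
    ∀ v w x : 𝒜 → T,
      (hamD' m p q t0 t1 r v x ≠ ⊤ → hamD' m p q t0 t1 r v w ≠ ⊤ →
        hamD' m p q t0 t1 r w x ≠ ⊤ →
        hamD' m p q t0 t1 r v x ≤ hamD' m p q t0 t1 r v w + hamD' m p q t0 t1 r w x) ∧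
      (hamD' m p q t0 t1 r v x = ⊤ →
        hamD' m p q t0 t1 r v w = ⊤ ∨ hamD' m p q t0 t1 r w x = ⊤) := by
  
  have hr1 : 1 ≤ r := hr.1
  intro v w x
  constructor
  · intro hvx hvw hwx
    by_cases hvx' : v = x
    · subst hvx'
      rw [hamD'_self ht hdist hr1]
      rcases eq_or_ne v w with rfl | hvw2
      · rw [hamD'_self ht hdist hr1]; simp
      · by_cases hfin : (hamSet v w).Finite
        · obtain ⟨c2, he2, hc2, _, _⟩ := hamD'_real ht hdist hr1 hvw2 hfin
          have hfin' : (hamSet w v).Finite := by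
            have : hamSet w v = hamSet v w := by ext z; simp [hamSet, ne_comm]
            rw [this]; exact hfin
          obtain ⟨c3, he3, hc3, _, _⟩ := hamD'_real ht hdist hr1 (Ne.symm hvw2) hfin'
          rw [he2, he3, ← WithTop.coe_add, ← WithTop.coe_zero, WithTop.coe_le_coe]
          linarith
        · exact absurd (hamD'_top ht hdist hr1 hvw2 hfin) hvw
    by_cases hwv : w = v
    · subst hwv
      rw [hamD'_self ht hdist hr1, zero_add]
    by_cases hwx2 : w = x
    · subst hwx2
      rw [hamD'_self ht hdist hr1, add_zero]
    have hvw2 : v ≠ w := Ne.symm hwv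
    have hfin1 : (hamSet v x).Finite := by
      by_contra h; exact hvx (hamD'_top ht hdist hr1 hvx' h)
    have hfin2 : (hamSet v w).Finite := by
      by_contra h; exact hvw (hamD'_top ht hdist hr1 hvw2 h)
    have hfin3 : (hamSet w x).Finite := by
      by_contra h; exact hwx (hamD'_top ht hdist hr1 hwx2 h)
    obtain ⟨c1, he1, _, _, hc1u⟩ := hamD'_real ht hdist hr1 hvx' hfin1
    obtain ⟨c2, he2, hc2l, hc2n, _⟩ := hamD'_real ht hdist hr1 hvw2 hfin2
    obtain ⟨c3, he3, hc3l, hc3n, _⟩ := hamD'_real ht hdist hr1 hwx2 hfin3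
    rw [he1, he2, he3, ← WithTop.coe_add, WithTop.coe_le_coe]
    have hn : (hamSet v x).ncard ≤ (hamSet v w).ncard + (hamSet w x).ncard := by
      calc (hamSet v x).ncard ≤ (hamSet v w ∪ hamSet w x).ncard :=
            Set.ncard_le_ncard (hamSet_subset v w x) (hfin2.union hfin3)
        _ ≤ _ := Set.ncard_union_le _ _
    have hn' : ((hamSet v x).ncard : ℝ) ≤ ((hamSet v w).ncard : ℝ) + ((hamSet w x).ncard : ℝ) := by
      exact_mod_cast hn
    have : c1 ≤ max 2.5 ((hamSet v x).ncard : ℝ) := hc1u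
    rcases max_cases 2.5 (((hamSet v x).ncard : ℝ)) with ⟨he, _⟩ | ⟨he, _⟩ <;>
      rw [he] at this <;> linarith
  · intro hvx
    have hvx' : v ≠ x := by
      rintro rfl
      rw [hamD'_self ht hdist hr1] at hvx
      exact (WithTop.coe_ne_top (a := (0:ℝ))) (by exact_mod_cast hvx)
    have hinf : ¬ (hamSet v x).Finite := by
      intro hfin
      obtain ⟨c, he, _⟩ := hamD'_real ht hdist hr1 hvx' hfin
      rw [he] at hvx
      exact WithTop.coe_ne_top hvx
    by_cases h2 : (hamSet v w).Finite
    · have h3 : ¬ (hamSet w x).Finite := by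
        intro h3
        exact hinf (((h2.union h3).subset (hamSet_subset v w x)))
      have hwx2 : w ≠ x := by rintro rfl; exact h3 (by simp [hamSet])
      exact Or.inr (hamD'_top ht hdist hr1 hwx2 h3)
    · have hvw2 : v ≠ w := by rintro rfl; exact h2 (by simp [hamSet])
      exact Or.inl (hamD'_top ht hdist hr1 hvw2 h2)
end

section
/- The modified Hamming Hamster-Wheel operator | is not a distance operator: there is no pseudo-distance S = ⟨C, ≺, g⟩ on 𝒱 such that V | W = V |_S W for all V, W ⊆ 𝒱. -/
section HamAux

variable {𝒜 T : Type*} {t0 t1 : T} {m : ℕ} {p q : ℕ → 𝒜}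

lemma unitVal_inj (ht : t0 ≠ t1) {a b : 𝒜} (h : unitVal t0 t1 a = unitVal t0 t1 b) : a = b := by
  by_contra hab
  have h2 := congrFun h a
  simp only [unitVal, if_pos rfl, if_neg hab] at h2
  exact ht h2.symm

lemma VV_iff (ht : t0 ≠ t1) (hdist : hamDistinctAtoms m p q)
    {i j : ℕ} (hi : i ∈ Set.Icc 1 m) (hj : j ∈ Set.Icc 1 m) :
    unitVal t0 t1 (p i) = unitVal t0 t1 (p j) ↔ i = j :=
  ⟨fun h => hdist.2.1 i hi j hj (unitVal_inj ht h), fun h => by rw [h]⟩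

lemma WW_iff (ht : t0 ≠ t1) (hdist : hamDistinctAtoms m p q)
    {i j : ℕ} (hi : i ∈ Set.Icc 1 m) (hj : j ∈ Set.Icc 1 m) :
    unitVal t0 t1 (q i) = unitVal t0 t1 (q j) ↔ i = j :=
  ⟨fun h => hdist.2.2 i hi j hj (unitVal_inj ht h), fun h => by rw [h]⟩

lemma VW_ne (ht : t0 ≠ t1) (hdist : hamDistinctAtoms m p q)
    {i j : ℕ} (hi : i ∈ Set.Icc 1 m) (hj : j ∈ Set.Icc 1 m) :
    unitVal t0 t1 (p i) ≠ unitVal t0 t1 (q j) :=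
  fun h => hdist.1 i hi j hj (unitVal_inj ht h)

lemma mem_hamX_V {i : ℕ} (hi : i ∈ Set.Icc 1 m) :
    unitVal t0 t1 (p i) ∈ hamX m p q t0 t1 := ⟨i, hi, Or.inl rfl⟩

lemma mem_hamX_W {i : ℕ} (hi : i ∈ Set.Icc 1 m) :
    unitVal t0 t1 (q i) ∈ hamX m p q t0 t1 := ⟨i, hi, Or.inr rfl⟩

lemma hamD_P1_false (ht : t0 ≠ t1) (hdist : hamDistinctAtoms m p q)
    {i j : ℕ} (hi : i ∈ Set.Icc 1 m) (hj : j ∈ Set.Icc 1 m) :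
    ¬ ((∃ k ∈ Set.Icc 1 m, ∃ l ∈ Set.Icc 1 m,
          unitVal t0 t1 (p i) = unitVal t0 t1 (p k) ∧
          unitVal t0 t1 (q j) = unitVal t0 t1 (p l)) ∨
        (∃ k ∈ Set.Icc 1 m, ∃ l ∈ Set.Icc 1 m,
          unitVal t0 t1 (p i) = unitVal t0 t1 (q k) ∧
          unitVal t0 t1 (q j) = unitVal t0 t1 (q l))) := by
  rintro (⟨k, hk, l, hl, _, h2⟩ | ⟨k, hk, l, hl, h1, _⟩)
  · exact VW_ne ht hdist hl hj h2.symm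
  · exact VW_ne ht hdist hi hk h1

lemma hamD_diag (ht : t0 ≠ t1) (hdist : hamDistinctAtoms m p q)
    {i : ℕ} (hi : i ∈ Set.Icc 1 m) :
    hamD m p q t0 t1 (unitVal t0 t1 (p i)) (unitVal t0 t1 (q i)) = ((2.4 : ℝ) : WithTop ℝ) := by
  unfold hamD
  rw [if_neg (VW_ne ht hdist hi hi),
    if_pos (Set.pair_subset (mem_hamX_V hi) (mem_hamX_W hi)),
    if_neg (hamD_P1_false ht hdist hi hi), if_pos ⟨i, hi, rfl⟩]

lemma hamD_off (ht : t0 ≠ t1) (hdist : hamDistinctAtoms m p q) (hm : 4 ≤ m)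
    {i j : ℕ} (hi : i ∈ Set.Icc 1 m) (hj : j ∈ Set.Icc 1 m)
    (hoff : ((i : ℤ) - j).natAbs ∈ ({1, m - 1} : Set ℕ)) :
    hamD m p q t0 t1 (unitVal t0 t1 (p i)) (unitVal t0 t1 (q j)) = ((2.5 : ℝ) : WithTop ℝ) := by
  have hij : i ≠ j := by
    simp only [Set.mem_insert_iff, Set.mem_singleton_iff] at hoff
    omega
  unfold hamD
  rw [if_neg (VW_ne ht hdist hi hj),
    if_pos (Set.pair_subset (mem_hamX_V hi) (mem_hamX_W hj)),
    if_neg (hamD_P1_false ht hdist hi hj), if_neg, if_pos ⟨i, hi, j, hj, rfl, hoff⟩]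
  rintro ⟨k, hk, hset⟩
  rcases Set.pair_eq_pair_iff.mp hset with ⟨h1, h2⟩ | ⟨h1, _⟩
  · exact hij (((VV_iff ht hdist hi hk).mp h1).trans ((WW_iff ht hdist hj hk).mp h2).symm)
  · exact VW_ne ht hdist hi hk h1

end HamAux

section OpAux

variable {𝒱 : Type*}

lemma lt_or_eq_top (x y : WithTop ℝ) : (x < y ∨ x = y) ↔ x ≤ y := (le_iff_lt_or_eq).symm

lemma inducedOp_single (d : 𝒱 → 𝒱 → WithTop ℝ) {a w1 w2 : 𝒱} (hne : w1 ≠ w2)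
    (h1 : d a w1 = ((2.4 : ℝ) : WithTop ℝ)) (h2 : d a w2 = ((2.5 : ℝ) : WithTop ℝ)) :
    inducedOp (· < ·) d {a} {w1, w2} = {w1} := by
  have h45 : ((2.4 : ℝ) : WithTop ℝ) ≤ ((2.5 : ℝ) : WithTop ℝ) := by
    exact_mod_cast (by norm_num : (2.4:ℝ) ≤ 2.5)
  ext x
  simp only [inducedOp, Set.mem_setOf_eq, Set.mem_insert_iff, Set.mem_singleton_iff,
    lt_or_eq_top, forall_eq, exists_eq_left]
  constructor
  · rintro ⟨hx | hx, hv⟩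
    · exact hx
    · subst hx
      exfalso
      have := hv w1 (Or.inl rfl)
      rw [h1, h2] at this
      exact absurd this (by exact_mod_cast (by norm_num : ¬ (2.5:ℝ) ≤ 2.4))
  · rintro rfl
    refine ⟨Or.inl rfl, ?_⟩
    rintro w' (rfl | rfl)
    · exact le_refl _
    · rw [h1, h2]; exact h45

lemma inducedOp_pair (d : 𝒱 → 𝒱 → WithTop ℝ) {a1 a2 w1 w2 : 𝒱}
    (h11 : d a1 w1 = ((2.4 : ℝ) : WithTop ℝ)) (h22 : d a2 w2 = ((2.4 : ℝ) : WithTop ℝ))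
    (h12 : d a1 w2 = ((2.5 : ℝ) : WithTop ℝ)) (h21 : d a2 w1 = ((2.5 : ℝ) : WithTop ℝ)) :
    inducedOp (· < ·) d {a1, a2} {w1, w2} = {w1, w2} := by
  have h45 : ((2.4 : ℝ) : WithTop ℝ) ≤ ((2.5 : ℝ) : WithTop ℝ) := by
    exact_mod_cast (by norm_num : (2.4:ℝ) ≤ 2.5)
  apply Set.Subset.antisymm (fun x hx => hx.1)
  intro x hx
  refine ⟨hx, ?_⟩
  rcases hx with rfl | rfl
  · refine ⟨a1, Or.inl rfl, ?_⟩
    rintro v' (rfl | rfl) w' (rfl | rfl) <;> rw [lt_or_eq_top] <;>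
      simp only [h11, h12, h21, h22] <;> first | exact le_refl _ | exact h45
  · refine ⟨a2, Or.inr rfl, ?_⟩
    rintro v' (rfl | rfl) w' (rfl | rfl) <;> rw [lt_or_eq_top] <;>
      simp only [h11, h12, h21, h22] <;> first | exact le_refl _ | exact h45

end OpAux

section HamOpAux

variable {𝒜 T : Type*} {t0 t1 : T} {m : ℕ} {p q : ℕ → 𝒜}

lemma hamOp_eq_induced {A B : Set (𝒜 → T)}
    (hA : A ⊆ hamX m p q t0 t1) (hB : B ⊆ hamX m p q t0 t1)
    (h1 : A ≠ {unitVal t0 t1 (p m), unitVal t0 t1 (p 1)})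
    (h2 : A ≠ {unitVal t0 t1 (q m), unitVal t0 t1 (q 1)}) :
    hamOp m p q t0 t1 A B = inducedOp (· < ·) (hamD m p q t0 t1) A B := by
  have hAX : A ∩ hamX m p q t0 t1 = A := Set.inter_eq_left.mpr hA
  unfold hamOp
  rw [if_pos fun a ha b hb => Or.inl (Set.pair_subset (hA ha) (hB hb)),
    if_neg, if_neg]
  · rw [hAX]; rintro ⟨hh, -⟩; exact h2 hh
  · rw [hAX]; rintro ⟨hh, -⟩; exact h1 hh

lemma hamOp_special (hm : 4 ≤ m) :
    hamOp m p q t0 t1 {unitVal t0 t1 (p m), unitVal t0 t1 (p 1)}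
      {unitVal t0 t1 (q m), unitVal t0 t1 (q 1)} = {unitVal t0 t1 (q m)} := by
  unfold hamOp
  · have hmIcc : m ∈ Set.Icc 1 m := ⟨by omega, le_refl m⟩
    have h1Icc : (1 : ℕ) ∈ Set.Icc 1 m := ⟨le_refl 1, by omega⟩
    have hA : ({unitVal t0 t1 (p m), unitVal t0 t1 (p 1)} : Set (𝒜 → T)) ⊆ hamX m p q t0 t1 :=
      Set.pair_subset (mem_hamX_V hmIcc) (mem_hamX_V h1Icc)
    have hB : ({unitVal t0 t1 (q m), unitVal t0 t1 (q 1)} : Set (𝒜 → T)) ⊆ hamX m p q t0 t1 :=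
      Set.pair_subset (mem_hamX_W hmIcc) (mem_hamX_W h1Icc)
    rw [if_pos fun a ha b hb => Or.inl (Set.pair_subset (hA ha) (hB hb)),
      if_pos ⟨Set.inter_eq_left.mpr hA, Set.inter_eq_left.mpr hB⟩]

end HamOpAux

/-- The modified Hamming Hamster-Wheel operator is not a distance operator: no
pseudo-distance `⟨C, lt, g⟩` on `𝒱` induces it. -/
theorem stmt13 {𝒜 T : Type*} [Countable 𝒜] [Infinite 𝒜]
    (t0 t1 : T) (ht : t0 ≠ t1)
    (m : ℕ) (hm : 4 ≤ m) (p q : ℕ → 𝒜) (hdist : hamDistinctAtoms m p q) :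
    ¬ ∃ (C : Type*) (lt : C → C → Prop) (g : (𝒜 → T) → (𝒜 → T) → C),
      Nonempty C ∧ StrictTotalOrder' lt ∧
      ∀ A B : Set (𝒜 → T), hamOp m p q t0 t1 A B = inducedOp lt g A B := by
  rintro ⟨C, lt, g, -, ⟨hirr, htrans, htot⟩, hind⟩
  have hmIcc : m ∈ Set.Icc 1 m := ⟨by omega, le_refl m⟩
  have h1Icc : (1 : ℕ) ∈ Set.Icc 1 m := ⟨le_refl 1, by omega⟩
  have hledef : ∀ x y : C, ¬ (lt x y ∨ x = y) → lt y x := by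
    intro x y h
    rcases htot x y (fun e => h (Or.inr e)) with h' | h'
    · exact absurd (Or.inl h') h
    · exact h'
  have hanti : ∀ x y : C, (lt x y ∨ x = y) → (lt y x ∨ y = x) → x = y := by
    rintro x y (h1 | rfl) h2
    · rcases h2 with h2 | rfl
      · exact ((hirr x) (htrans x y x h1 h2)).elim
      · rfl
    · rfl
  -- F1 : strict comparison from singleton operator values
  have F1 : ∀ i j : ℕ, i ∈ Set.Icc 1 m → j ∈ Set.Icc 1 m →
      ((i : ℤ) - j).natAbs ∈ ({1, m - 1} : Set ℕ) →
      lt (g (unitVal t0 t1 (p i)) (unitVal t0 t1 (q i)))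
         (g (unitVal t0 t1 (p i)) (unitVal t0 t1 (q j))) := by
    intro i j hi hj hoff
    have hij : i ≠ j := by
      have h := hoff
      simp only [Set.mem_insert_iff, Set.mem_singleton_iff] at h
      omega
    have hWne : unitVal t0 t1 (q i) ≠ unitVal t0 t1 (q j) :=
      fun h => hij ((WW_iff ht hdist hi hj).mp h)
    have hAne1 : ({unitVal t0 t1 (p i)} : Set (𝒜 → T)) ≠
        {unitVal t0 t1 (p m), unitVal t0 t1 (p 1)} := by
      intro h
      have h1 : unitVal t0 t1 (p m) ∈ ({unitVal t0 t1 (p i)} : Set (𝒜 → T)) :=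
        h ▸ Set.mem_insert _ _
      have h2 : unitVal t0 t1 (p 1) ∈ ({unitVal t0 t1 (p i)} : Set (𝒜 → T)) :=
        h ▸ Set.mem_insert_iff.mpr (Or.inr rfl)
      have e1 := (VV_iff ht hdist hmIcc hi).mp h1
      have e2 := (VV_iff ht hdist h1Icc hi).mp h2
      omega
    have hAne2 : ({unitVal t0 t1 (p i)} : Set (𝒜 → T)) ≠
        {unitVal t0 t1 (q m), unitVal t0 t1 (q 1)} := by
      intro h
      have h1 : unitVal t0 t1 (q m) ∈ ({unitVal t0 t1 (p i)} : Set (𝒜 → T)) :=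
        h ▸ Set.mem_insert _ _
      exact VW_ne ht hdist hi hmIcc (Set.mem_singleton_iff.mp h1).symm
    have hcomp : inducedOp lt g {unitVal t0 t1 (p i)}
        {unitVal t0 t1 (q i), unitVal t0 t1 (q j)} = {unitVal t0 t1 (q i)} := by
      rw [← hind]
      rw [hamOp_eq_induced (Set.singleton_subset_iff.mpr (mem_hamX_V hi))
        (Set.pair_subset (mem_hamX_W hi) (mem_hamX_W hj)) hAne1 hAne2]
      exact inducedOp_single _ hWne (hamD_diag ht hdist hi) (hamD_off ht hdist hm hi hj hoff)
    have hnot : unitVal t0 t1 (q j) ∉ inducedOp lt g {unitVal t0 t1 (p i)}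
        {unitVal t0 t1 (q i), unitVal t0 t1 (q j)} := by
      rw [hcomp]
      exact fun h => hWne (Set.mem_singleton_iff.mp h).symm
    by_contra hcon
    apply hnot
    refine ⟨Set.mem_insert_iff.mpr (Or.inr rfl), unitVal t0 t1 (p i), rfl, ?_⟩
    intro v' hv' w' hw'
    simp only [Set.mem_singleton_iff] at hv'
    subst hv'
    simp only [Set.mem_insert_iff, Set.mem_singleton_iff] at hw'
    rcases hw' with rfl | rfl
    · by_cases he : g (unitVal t0 t1 (p i)) (unitVal t0 t1 (q j)) =
          g (unitVal t0 t1 (p i)) (unitVal t0 t1 (q i))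
      · exact Or.inr he
      · rcases htot _ _ he with h' | h'
        · exact Or.inl h'
        · exact absurd h' hcon
    · exact Or.inr rfl
  -- F2 : diagonal equalities from pair operator values
  have F2 : ∀ i j : ℕ, i ∈ Set.Icc 1 m → j ∈ Set.Icc 1 m →
      ((i : ℤ) - j).natAbs ∈ ({1, m - 1} : Set ℕ) →
      ¬ ((i = m ∧ j = 1) ∨ (i = 1 ∧ j = m)) →
      g (unitVal t0 t1 (p i)) (unitVal t0 t1 (q i)) =
        g (unitVal t0 t1 (p j)) (unitVal t0 t1 (q j)) := by
    intro i j hi hj hoff hnotspec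
    have hoff' : ((j : ℤ) - i).natAbs ∈ ({1, m - 1} : Set ℕ) := by
      simp only [Set.mem_insert_iff, Set.mem_singleton_iff] at hoff ⊢
      omega
    have hAne1 : ({unitVal t0 t1 (p i), unitVal t0 t1 (p j)} : Set (𝒜 → T)) ≠
        {unitVal t0 t1 (p m), unitVal t0 t1 (p 1)} := by
      intro h
      rcases Set.pair_eq_pair_iff.mp h with ⟨h1, h2⟩ | ⟨h1, h2⟩
      · exact hnotspec (Or.inl ⟨(VV_iff ht hdist hi hmIcc).mp h1,
          (VV_iff ht hdist hj h1Icc).mp h2⟩)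
      · exact hnotspec (Or.inr ⟨(VV_iff ht hdist hi h1Icc).mp h1,
          (VV_iff ht hdist hj hmIcc).mp h2⟩)
    have hAne2 : ({unitVal t0 t1 (p i), unitVal t0 t1 (p j)} : Set (𝒜 → T)) ≠
        {unitVal t0 t1 (q m), unitVal t0 t1 (q 1)} := by
      intro h
      rcases Set.pair_eq_pair_iff.mp h with ⟨h1, -⟩ | ⟨h1, -⟩
      · exact VW_ne ht hdist hi hmIcc h1
      · exact VW_ne ht hdist hi h1Icc h1
    have hcomp : inducedOp lt g {unitVal t0 t1 (p i), unitVal t0 t1 (p j)}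
        {unitVal t0 t1 (q i), unitVal t0 t1 (q j)} =
        {unitVal t0 t1 (q i), unitVal t0 t1 (q j)} := by
      rw [← hind]
      rw [hamOp_eq_induced (Set.pair_subset (mem_hamX_V hi) (mem_hamX_V hj))
        (Set.pair_subset (mem_hamX_W hi) (mem_hamX_W hj)) hAne1 hAne2]
      exact inducedOp_pair _ (hamD_diag ht hdist hi) (hamD_diag ht hdist hj)
        (hamD_off ht hdist hm hi hj hoff) (hamD_off ht hdist hm hj hi hoff')
    have hWmem_i : unitVal t0 t1 (q i) ∈ inducedOp lt g
        {unitVal t0 t1 (p i), unitVal t0 t1 (p j)}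
        {unitVal t0 t1 (q i), unitVal t0 t1 (q j)} := by
      rw [hcomp]; exact Set.mem_insert _ _
    have hWmem_j : unitVal t0 t1 (q j) ∈ inducedOp lt g
        {unitVal t0 t1 (p i), unitVal t0 t1 (p j)}
        {unitVal t0 t1 (q i), unitVal t0 t1 (q j)} := by
      rw [hcomp]; exact Set.mem_insert_iff.mpr (Or.inr rfl)
    simp only [inducedOp, Set.mem_setOf_eq] at hWmem_i hWmem_j
    obtain ⟨-, v, hv, hmin⟩ := hWmem_i
    obtain ⟨-, u, hu, hmin'⟩ := hWmem_j
    simp only [Set.mem_insert_iff, Set.mem_singleton_iff] at hv hu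
    have h1 : lt (g (unitVal t0 t1 (p i)) (unitVal t0 t1 (q i)))
        (g (unitVal t0 t1 (p j)) (unitVal t0 t1 (q j))) ∨
        g (unitVal t0 t1 (p i)) (unitVal t0 t1 (q i)) =
        g (unitVal t0 t1 (p j)) (unitVal t0 t1 (q j)) := by
      rcases hv with rfl | rfl
      · exact hmin _ (Set.mem_insert_iff.mpr (Or.inr rfl)) _
          (Set.mem_insert_iff.mpr (Or.inr rfl))
      · exfalso
        have hc := hmin _ (Set.mem_insert_iff.mpr (Or.inr rfl)) _
          (Set.mem_insert_iff.mpr (Or.inr rfl))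
        have hs := F1 j i hj hi hoff'
        rcases hc with hc | hc
        · exact hirr _ (htrans _ _ _ hs hc)
        · rw [hc] at hs
          exact hirr _ hs
    have h2 : lt (g (unitVal t0 t1 (p j)) (unitVal t0 t1 (q j)))
        (g (unitVal t0 t1 (p i)) (unitVal t0 t1 (q i))) ∨
        g (unitVal t0 t1 (p j)) (unitVal t0 t1 (q j)) =
        g (unitVal t0 t1 (p i)) (unitVal t0 t1 (q i)) := by
      rcases hu with rfl | rfl
      · exfalso
        have hc := hmin' _ (Set.mem_insert _ _) _ (Set.mem_insert _ _)
        have hs := F1 i j hi hj hoff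
        rcases hc with hc | hc
        · exact hirr _ (htrans _ _ _ hs hc)
        · rw [hc] at hs
          exact hirr _ hs
      · exact hmin' _ (Set.mem_insert _ _) _ (Set.mem_insert _ _)
    exact hanti _ _ h1 h2
  -- strict inequality from the special (modified) case
  have hoff1m : (((1 : ℕ) : ℤ) - (m : ℕ)).natAbs ∈ ({1, m - 1} : Set ℕ) := by
    simp only [Set.mem_insert_iff, Set.mem_singleton_iff]
    omega
  have hoffm1 : (((m : ℕ) : ℤ) - (1 : ℕ)).natAbs ∈ ({1, m - 1} : Set ℕ) := by
    simp only [Set.mem_insert_iff, Set.mem_singleton_iff]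
    omega
  have hs1 := F1 1 m h1Icc hmIcc hoff1m
  have hsm := F1 m 1 hmIcc h1Icc hoffm1
  have hspec : inducedOp lt g {unitVal t0 t1 (p m), unitVal t0 t1 (p 1)}
      {unitVal t0 t1 (q m), unitVal t0 t1 (q 1)} = {unitVal t0 t1 (q m)} := by
    rw [← hind]
    exact hamOp_special hm
  have hW1ne : unitVal t0 t1 (q 1) ≠ unitVal t0 t1 (q m) :=
    fun h => (by omega : (1 : ℕ) ≠ m) ((WW_iff ht hdist h1Icc hmIcc).mp h)
  have hnot : unitVal t0 t1 (q 1) ∉ inducedOp lt g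
      {unitVal t0 t1 (p m), unitVal t0 t1 (p 1)}
      {unitVal t0 t1 (q m), unitVal t0 t1 (q 1)} := by
    rw [hspec]
    exact fun h => hW1ne (Set.mem_singleton_iff.mp h)
  have hstrict : lt (g (unitVal t0 t1 (p m)) (unitVal t0 t1 (q m)))
      (g (unitVal t0 t1 (p 1)) (unitVal t0 t1 (q 1))) := by
    have h' : ¬ ∀ v' ∈ ({unitVal t0 t1 (p m), unitVal t0 t1 (p 1)} : Set (𝒜 → T)),
        ∀ w' ∈ ({unitVal t0 t1 (q m), unitVal t0 t1 (q 1)} : Set (𝒜 → T)),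
        lt (g (unitVal t0 t1 (p 1)) (unitVal t0 t1 (q 1))) (g v' w') ∨
          g (unitVal t0 t1 (p 1)) (unitVal t0 t1 (q 1)) = g v' w' := by
      intro hall
      exact hnot ⟨Set.mem_insert_iff.mpr (Or.inr rfl), unitVal t0 t1 (p 1),
        Set.mem_insert_iff.mpr (Or.inr rfl), hall⟩
    push_neg at h'
    obtain ⟨v', hv', w', hw', hnle⟩ := h'
    have hlt := hledef _ _ (not_or.mpr hnle)
    simp only [Set.mem_insert_iff, Set.mem_singleton_iff] at hv' hw'
    rcases hv' with rfl | rfl <;> rcases hw' with rfl | rfl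
    · exact hlt
    · exact htrans _ _ _ hsm hlt
    · exact (hirr _ (htrans _ _ _ hs1 hlt)).elim
    · exact (hirr _ hlt).elim
  -- the chain of equalities around the wheel
  have chain : ∀ n : ℕ, 1 + n ≤ m →
      g (unitVal t0 t1 (p (1 + n))) (unitVal t0 t1 (q (1 + n))) =
        g (unitVal t0 t1 (p 1)) (unitVal t0 t1 (q 1)) := by
    intro n
    induction n with
    | zero => intro _; rfl
    | succ k ih =>
      intro hk
      have e := F2 (1 + k) (1 + k + 1) ⟨by omega, by omega⟩ ⟨by omega, by omega⟩
        (by simp only [Set.mem_insert_iff, Set.mem_singleton_iff]; omega)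
        (by omega)
      rw [show 1 + (k + 1) = 1 + k + 1 from rfl]
      exact e.symm.trans (ih (by omega))
  have heq : g (unitVal t0 t1 (p m)) (unitVal t0 t1 (q m)) =
      g (unitVal t0 t1 (p 1)) (unitVal t0 t1 (q 1)) := by
    have hc := chain (m - 1) (by omega)
    rw [show 1 + (m - 1) = m by omega] at hc
    exact hc
  rw [heq] at hstrict
  exact hirr _ hstrict
end
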